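/- Under the same hypotheses (f β-smooth and bounded below, 0 < η < 1/β, ∑|v_t|² < ∞, x_{t+1} = x_t − η∇f(x_t) + v_t), the gradient converges to zero: lim_{t→∞} ∇f(x_t) = 0. -/

import Mathlib

open Filter

lemma descent_lemma {d : ℕ} (f : EuclideanSpace ℝ (Fin d) → ℝ) (β : ℝ)
    (hf : Differentiable ℝ f)
    (hlip : ∀ x y, ‖gradient f x - gradient f y‖ ≤ β * ‖x - y‖) (x y : EuclideanSpace ℝ (Fin d)) :
    f y ≤ f x + (inner ℝ (gradient f x) (y - x) : ℝ) + β / 2 * ‖y - x‖ ^ 2 := by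
  set a : ℝ := (inner ℝ (gradient f x) (y - x) : ℝ) with ha
  set b : ℝ := β * ‖y - x‖ ^ 2 with hb
  set p : ℝ → EuclideanSpace ℝ (Fin d) := fun t => x + t • (y - x) with hp
  have key : ∀ t : ℝ, HasDerivAt (fun s => f (p s))
      ((inner ℝ (gradient f (p t)) (y - x) : ℝ)) t := by
    intro t
    have h1 : HasDerivAt p (y - x) t := by
      have := ((hasDerivAt_id t).smul_const (y - x)).const_add x
      rw [one_smul] at this
      exact this
    have h2 := (hf (p t)).hasGradientAt.hasFDerivAt
    have := h2.comp_hasDerivAt t h1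
    exact this
  set ψ : ℝ → ℝ := fun t => f (p t) - t * a - b * t ^ 2 / 2 with hψ
  have hψ' : ∀ t : ℝ, HasDerivAt ψ
      ((inner ℝ (gradient f (p t)) (y - x) : ℝ) - a - b * t) t := by
    intro t
    have h3 : HasDerivAt (fun t : ℝ => t * a) a t := by
      simpa using (hasDerivAt_id t).mul_const a
    have h4 : HasDerivAt (fun t : ℝ => b * t ^ 2 / 2) (b * t) t := by
      have := ((hasDerivAt_pow 2 t).const_mul b).div_const 2
      refine this.congr_deriv ?_
      rw [show (2:ℕ) - 1 = 1 from rfl]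
      push_cast
      ring
    exact ((key t).sub h3).sub h4
  have hnonpos : ∀ t ∈ Set.Icc (0:ℝ) 1,
      (inner ℝ (gradient f (p t)) (y - x) : ℝ) - a - b * t ≤ 0 := by
    intro t ht
    have h5 : (inner ℝ (gradient f (p t)) (y - x) : ℝ) - a
        = (inner ℝ (gradient f (p t) - gradient f x) (y - x) : ℝ) := by
      rw [inner_sub_left]
    have h6 : (inner ℝ (gradient f (p t) - gradient f x) (y - x) : ℝ)
        ≤ ‖gradient f (p t) - gradient f x‖ * ‖y - x‖ := real_inner_le_norm _ _
    have h7 : ‖gradient f (p t) - gradient f x‖ ≤ β * ‖p t - x‖ := hlip _ _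
    have h8 : ‖p t - x‖ = t * ‖y - x‖ := by
      simp [hp, norm_smul, abs_of_nonneg ht.1]
    have h9 : β * (t * ‖y - x‖) * ‖y - x‖ = b * t := by rw [hb]; ring
    have h10 : ‖gradient f (p t) - gradient f x‖ * ‖y - x‖ ≤ b * t := by
      rw [← h9]
      exact mul_le_mul_of_nonneg_right (h8 ▸ h7) (norm_nonneg _)
    linarith [h5 ▸ (h6.trans h10)]
  have hdiff : Differentiable ℝ ψ := fun t => (hψ' t).differentiableAt
  have hanti : AntitoneOn ψ (Set.Icc (0:ℝ) 1) := by
    apply antitoneOn_of_deriv_nonpos (convex_Icc 0 1) hdiff.continuous.continuousOn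
      hdiff.differentiableOn
    intro t ht
    rw [interior_Icc] at ht
    rw [(hψ' t).deriv]
    exact hnonpos t (Set.mem_Icc_of_Ioo ht)
  have h11 := hanti (Set.left_mem_Icc.2 zero_le_one) (Set.right_mem_Icc.2 zero_le_one) zero_le_one
  have hp0 : p 0 = x := by simp [hp]
  have hp1 : p 1 = y := by simp [hp]
  simp only [hψ, hp0, hp1, one_pow, mul_one] at h11
  rw [hb] at h11
  linarith

theorem stmt_1 {d : ℕ} (f : EuclideanSpace ℝ (Fin d) → ℝ) (β η : ℝ) (hβ : 0 < β)
    (hf : Differentiable ℝ f)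
    (hlip : ∀ x y, ‖gradient f x - gradient f y‖ ≤ β * ‖x - y‖)
    (hbdd : BddBelow (Set.range f))
    (hη0 : 0 < η) (hηβ : η < 1 / β)
    (v x : ℕ → EuclideanSpace ℝ (Fin d))
    (hv : Summable (fun t => ‖v t‖ ^ 2))
    (hx : ∀ t, x (t + 1) = x t - η • gradient f (x t) + v t) :
    Tendsto (fun t => gradient f (x t)) atTop (nhds 0) := by
  have hβη : β * η < 1 := by
    rw [lt_div_iff₀ hβ] at hηβ; linarith
  have hε : (0:ℝ) < η * (1 - β * η) := mul_pos hη0 (by linarith)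
  set c : ℝ := η * (1 - β * η) / 2 with hc
  set C : ℝ := β + 1 / (2 * (η * (1 - β * η))) with hC
  have hc0 : (0:ℝ) < c := by positivity
  have hC0 : (0:ℝ) < C := by
    rw [hC]
    have h2 : (0:ℝ) < 2 * (η * (1 - β * η)) := by linarith
    have h3 := one_div_pos.mpr h2
    linarith
  have step : ∀ t, f (x (t + 1)) + c * ‖gradient f (x t)‖ ^ 2
      ≤ f (x t) + C * ‖v t‖ ^ 2 := by
    intro t
    set g := gradient f (x t) with hg
    have hd := descent_lemma f β hf hlip (x t) (x (t + 1))
    have hst : x (t + 1) - x t = v t - η • g := by rw [hx t]; module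
    rw [hst] at hd
    have hi : (inner ℝ g (v t - η • g) : ℝ) = (inner ℝ g (v t) : ℝ) - η * ‖g‖ ^ 2 := by
      rw [inner_sub_right, real_inner_smul_right, real_inner_self_eq_norm_sq]
    rw [hi] at hd
    have hn : ‖v t - η • g‖ ^ 2 ≤ 2 * ‖v t‖ ^ 2 + 2 * η ^ 2 * ‖g‖ ^ 2 := by
      have h1 := norm_sub_le (v t) (η • g)
      have h2 : ‖η • g‖ = η * ‖g‖ := by
        rw [norm_smul, Real.norm_eq_abs, abs_of_pos hη0]
      nlinarith [norm_nonneg (v t - η • g), norm_nonneg (v t), norm_nonneg (η • g),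
        sq_nonneg (‖v t‖ - ‖η • g‖)]
    have hy : (inner ℝ g (v t) : ℝ) ≤ (η * (1 - β * η)) / 2 * ‖g‖ ^ 2
        + 1 / (2 * (η * (1 - β * η))) * ‖v t‖ ^ 2 := by
      have h1 := real_inner_le_norm g (v t)
      have h4 : ‖g‖ * ‖v t‖ ≤ ((η * (1 - β * η)) ^ 2 * ‖g‖ ^ 2 + ‖v t‖ ^ 2)
          / (2 * (η * (1 - β * η))) := by
        rw [le_div_iff₀ (by positivity)]
        nlinarith [sq_nonneg ((η * (1 - β * η)) * ‖g‖ - ‖v t‖)]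
      have h5 : ((η * (1 - β * η)) ^ 2 * ‖g‖ ^ 2 + ‖v t‖ ^ 2) / (2 * (η * (1 - β * η)))
          = (η * (1 - β * η)) / 2 * ‖g‖ ^ 2 + 1 / (2 * (η * (1 - β * η))) * ‖v t‖ ^ 2 := by
        field_simp
      linarith [h1.trans (h4.trans_eq h5)]
    have h6 : β / 2 * ‖v t - η • g‖ ^ 2 ≤ β / 2 * (2 * ‖v t‖ ^ 2 + 2 * η ^ 2 * ‖g‖ ^ 2) :=
      mul_le_mul_of_nonneg_left hn (by positivity)
    rw [hc, hC]
    nlinarith [hd, hy, h6]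
  obtain ⟨m, hm⟩ := hbdd
  have hm' : ∀ z, m ≤ f z := fun z => hm ⟨z, rfl⟩
  have key : ∀ n, c * (∑ t ∈ Finset.range n, ‖gradient f (x t)‖ ^ 2) + f (x n)
      ≤ f (x 0) + C * ∑ t ∈ Finset.range n, ‖v t‖ ^ 2 := by
    intro n
    induction n with
    | zero => simp
    | succ n ih =>
      rw [Finset.sum_range_succ, Finset.sum_range_succ]
      have := step n
      nlinarith [this, ih]
  have hsum : Summable (fun t => ‖gradient f (x t)‖ ^ 2) := by
    apply summable_of_sum_range_le (c := (f (x 0) - m + C * ∑' t, ‖v t‖ ^ 2) / c)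
      (fun t => sq_nonneg _)
    intro n
    have h1 := key n
    have h2 := hm' (x n)
    have h3 : ∑ t ∈ Finset.range n, ‖v t‖ ^ 2 ≤ ∑' t, ‖v t‖ ^ 2 :=
      hv.sum_le_tsum _ (fun i _ => sq_nonneg _)
    rw [le_div_iff₀ hc0]
    nlinarith [mul_le_mul_of_nonneg_left h3 hC0.le]
  have h0 : Tendsto (fun t => ‖gradient f (x t)‖ ^ 2) atTop (nhds 0) :=
    hsum.tendsto_atTop_zero
  have h1 : Tendsto (fun t => ‖gradient f (x t)‖) atTop (nhds 0) := by
    have heq : (fun t => ‖gradient f (x t)‖)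
        = fun t => Real.sqrt (‖gradient f (x t)‖ ^ 2) :=
      funext fun t => (Real.sqrt_sq (norm_nonneg _)).symm
    rw [heq]
    exact (Real.continuous_sqrt.tendsto' 0 0 Real.sqrt_zero).comp h0
  exact tendsto_zero_iff_norm_tendsto_zero.mpr h1
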